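/- Let P(r,s|a,b) be a nonsignaling box such that the set V(P) is nonempty. Then the minimax equality inf_{ρ(r,𝐬|a)∈V(P)} sup_{q} I_q(A;𝐒) = sup_{q} inf_{ρ(r,𝐬|a)∈V(P)} I_q(A;𝐒) holds, where q ranges over all probability distributions on {1,…,A} and I_q(A;𝐒) denotes the mutual information of the channel ρ(𝐬|a) = Σ_r ρ(r,𝐬|a) with input distribution q. -/

import Mathlib

open scoped BigOperators

/-- A probability distribution on a finite type. -/
def IsDist {α : Type*} [Fintype α] (q : α → ℝ) : Prop :=
  (∀ x, 0 ≤ q x) ∧ ∑ x, q x = 1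

/-- Mutual information of the channel `W` with input distribution `q`
(convention `0 · log 0 = 0`, automatic since `Real.log 0 = 0`). -/
noncomputable def mutInfo {X Y : Type*} [Fintype X] [Fintype Y]
    (W : Y → X → ℝ) (q : X → ℝ) : ℝ :=
  ∑ y, ∑ x, W y x * q x * Real.log (W y x / ∑ x', W y x' * q x')

/-- A nonsignaling box `P(r,s|a,b)`. -/
def IsNSBox {R S : Type*} [Fintype R] [Fintype S] {A B : ℕ}
    (P : R → S → Fin A → Fin B → ℝ) : Prop :=
  (∀ r s a b, 0 ≤ P r s a b) ∧
  (∀ a b, ∑ r, ∑ s, P r s a b = 1) ∧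
  (∀ a r b b', ∑ s, P r s a b = ∑ s, P r s a b') ∧
  (∀ b s a a', ∑ r, P r s a b = ∑ r, P r s a' b)

/-- Membership in the set `V(P)`: `ρ(r,𝐬|a)` is a conditional probability over
`r` and sequences `𝐬 ∈ 𝓢^B` whose marginal on `(r, s_b)` is `P(r,s|a,b)`. -/
def MemV {R S : Type*} [Fintype R] [Fintype S] [DecidableEq S] {A B : ℕ}
    (P : R → S → Fin A → Fin B → ℝ)
    (ρ : R → (Fin B → S) → Fin A → ℝ) : Prop :=
  (∀ r ss a, 0 ≤ ρ r ss a) ∧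
  (∀ a, ∑ r, ∑ ss : Fin B → S, ρ r ss a = 1) ∧
  (∀ a b r s, ∑ ss : Fin B → S, (if ss b = s then ρ r ss a else 0) = P r s a b)

namespace MinimaxAux

noncomputable def k (u w : ℝ) : ℝ := u * Real.log (u / w)

lemma log_ge {x : ℝ} (hx : 0 < x) : 1 - x⁻¹ ≤ Real.log x := by
  have h := Real.log_le_sub_one_of_pos (inv_pos.mpr hx)
  rw [Real.log_inv] at h
  linarith

lemma k_smul {t : ℝ} (ht : 0 ≤ t) (u w : ℝ) : k (t * u) (t * w) = t * k u w := by
  rcases eq_or_lt_of_le ht with h | h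
  · simp [k, ← h]
  · simp [k, mul_div_mul_left _ _ (ne_of_gt h)]; ring

lemma k_ge {U Wd u w : ℝ} (hU : 0 < U) (hW : 0 < Wd) (hu : 0 ≤ u) (hw : 0 ≤ w)
    (himp : w = 0 → u = 0) :
    u * Real.log (U / Wd) + u - w * (U / Wd) ≤ k u w := by
  rcases eq_or_lt_of_le hu with h | h
  · have : 0 ≤ w * (U / Wd) := mul_nonneg hw (by positivity)
    simp [k, ← h]; linarith
  · have hwpos : 0 < w := lt_of_le_of_ne hw (fun h0 => by simp [himp h0.symm] at h)
    have hx : 0 < (u * Wd) / (w * U) := by positivity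
    have hlog := log_ge hx
    have hinv : ((u * Wd) / (w * U))⁻¹ = (w * U) / (u * Wd) := by
      rw [inv_div]
    rw [hinv] at hlog
    have key : u * ((u * Wd) / (w * U)).log ≥ u * (1 - (w * U) / (u * Wd)) :=
      mul_le_mul_of_nonneg_left hlog hu
    have hexp : Real.log ((u * Wd) / (w * U)) = Real.log (u / w) - Real.log (U / Wd) := by
      rw [show (u * Wd) / (w * U) = (u / w) / (U / Wd) by field_simp]
      exact Real.log_div (by positivity) (by positivity)
    rw [hexp] at key
    have hexp2 : u * (1 - (w * U) / (u * Wd)) = u - w * (U / Wd) := by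
      field_simp
    rw [hexp2] at key
    unfold k
    nlinarith [key]

lemma k_add {u1 u2 w1 w2 : ℝ} (hu1 : 0 ≤ u1) (hu2 : 0 ≤ u2) (hw1 : 0 ≤ w1) (hw2 : 0 ≤ w2)
    (h1 : w1 = 0 → u1 = 0) (h2 : w2 = 0 → u2 = 0) :
    k (u1 + u2) (w1 + w2) ≤ k u1 w1 + k u2 w2 := by
  rcases eq_or_lt_of_le (add_nonneg hu1 hu2) with hU | hU
  · have e1 : u1 = 0 := by linarith
    have e2 : u2 = 0 := by linarith
    simp [k, e1, e2, ← hU]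
  · have hWd : 0 < w1 + w2 := by
      rcases eq_or_lt_of_le (add_nonneg hw1 hw2) with h | h
      · exfalso
        have e1 : w1 = 0 := by linarith
        have e2 : w2 = 0 := by linarith
        have q1 := h1 e1; have q2 := h2 e2
        rw [q1, q2] at hU; simp at hU
      · exact h
    have g1 := k_ge hU hWd hu1 hw1 h1
    have g2 := k_ge hU hWd hu2 hw2 h2
    have : (u1 + u2) * Real.log ((u1 + u2) / (w1 + w2)) + (u1 + u2)
        - (w1 + w2) * ((u1 + u2) / (w1 + w2)) ≤ k u1 w1 + k u2 w2 := by linarith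
    have hc : (w1 + w2) * ((u1 + u2) / (w1 + w2)) = u1 + u2 := by
      field_simp
    rw [hc] at this
    simp only [k] at this ⊢
    linarith

lemma k_comb {t t' u1 u2 w1 w2 : ℝ} (ht : 0 ≤ t) (ht' : 0 ≤ t')
    (hu1 : 0 ≤ u1) (hu2 : 0 ≤ u2) (hw1 : 0 ≤ w1) (hw2 : 0 ≤ w2)
    (h1 : w1 = 0 → u1 = 0) (h2 : w2 = 0 → u2 = 0) :
    k (t * u1 + t' * u2) (t * w1 + t' * w2) ≤ t * k u1 w1 + t' * k u2 w2 := by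
  have := k_add (u1 := t * u1) (u2 := t' * u2) (w1 := t * w1) (w2 := t' * w2)
    (mul_nonneg ht hu1) (mul_nonneg ht' hu2) (mul_nonneg ht hw1) (mul_nonneg ht' hw2)
    (fun h => by rcases mul_eq_zero.mp h with h | h <;> simp [h, h1, h2])
    (fun h => by rcases mul_eq_zero.mp h with h | h <;> simp [h, h1, h2])
  rwa [k_smul ht, k_smul ht'] at this


variable {E F : Type*}
  [AddCommGroup E] [Module ℝ E] [TopologicalSpace E] [IsTopologicalAddGroup E] [ContinuousSMul ℝ E]
  [AddCommGroup F] [Module ℝ F] [TopologicalSpace F] [ContinuousAdd F] [ContinuousSMul ℝ F]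

/-- Kneser-type pair lemma. -/
lemma pair_lemma {X : Set E} {Y : Set F} {f : F → E → ℝ} {D : Set E}
    (hf : Continuous fun p : F × E => f p.1 p.2)
    (hYconv : Convex ℝ Y)
    (hconc : ∀ y ∈ Y, ∀ x1 ∈ X, ∀ x2 ∈ X, ∀ t t' : ℝ, 0 ≤ t → 0 ≤ t' → t + t' = 1 →
      t * f y x1 + t' * f y x2 ≤ f y (t • x1 + t' • x2))
    (hconv : ∀ x ∈ X, ∀ y1 ∈ Y, ∀ y2 ∈ Y, ∀ t t' : ℝ, 0 ≤ t → 0 ≤ t' → t + t' = 1 →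
      f (t • y1 + t' • y2) x ≤ t * f y1 x + t' * f y2 x)
    (hDX : D ⊆ X) (hDconv : Convex ℝ D)
    {c c' : ℝ} (hcc : c' < c)
    (hcD : ∀ y ∈ Y, ∃ x ∈ D, c < f y x)
    {y1 y2 : F} (hy1 : y1 ∈ Y) (hy2 : y2 ∈ Y) :
    ∃ x ∈ D, c' < f y1 x ∧ c' < f y2 x := by
  by_contra hcon
  push_neg at hcon
  -- segment
  set yseg : ℝ → F := fun t => (1 - t) • y1 + t • y2 with hyseg
  have hysegY : ∀ t ∈ Set.Icc (0:ℝ) 1, yseg t ∈ Y := by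
    intro t ht
    exact hYconv hy1 hy2 (by linarith [ht.2]) ht.1 (by ring)
  have hyseg_cont : Continuous yseg := by
    apply Continuous.add
    · exact (continuous_const.sub continuous_id).smul continuous_const
    · exact continuous_id.smul continuous_const
  -- open sets
  set U1 : Set E := {x | c' < f y1 x} with hU1
  set U2 : Set E := {x | c' < f y2 x} with hU2
  have hfy : ∀ y : F, Continuous fun x => f y x := fun y =>
    hf.comp (continuous_const.prodMk continuous_id)
  have hU1o : IsOpen U1 := isOpen_lt continuous_const (hfy y1)
  have hU2o : IsOpen U2 := isOpen_lt continuous_const (hfy y2)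
  have hDU : ∀ x ∈ D, x ∈ U1 → x ∈ U2 → False := by
    intro x hx h1 h2
    exact absurd (hcon x hx h1) (not_le.mpr h2)
  -- level sets
  set At : ℝ → Set E := fun t => {x ∈ D | c ≤ f (yseg t) x} with hAt
  have hAt_conv : ∀ t ∈ Set.Icc (0:ℝ) 1, Convex ℝ (At t) := by
    intro t ht
    intro x1 hx1 x2 hx2 a b ha hb hab
    refine ⟨hDconv hx1.1 hx2.1 ha hb hab, ?_⟩
    have := hconc (yseg t) (hysegY t ht) x1 (hDX hx1.1) x2 (hDX hx2.1) a b ha hb hab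
    have hsum : a * c + b * c = c := by rw [← add_mul, hab, one_mul]
    have e1 := mul_le_mul_of_nonneg_left hx1.2 ha
    have e2 := mul_le_mul_of_nonneg_left hx2.2 hb
    linarith
  have hAt_sub : ∀ t ∈ Set.Icc (0:ℝ) 1, At t ⊆ U1 ∪ U2 := by
    intro t ht x hx
    have hcomb := hconv x (hDX hx.1) y1 hy1 y2 hy2 (1 - t) t (by linarith [ht.2]) ht.1
      (by ring)
    by_contra hnot
    simp only [Set.mem_union, hU1, hU2, Set.mem_setOf_eq, not_or, not_lt] at hnot
    have : f (yseg t) x ≤ c' := by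
      calc f (yseg t) x ≤ (1 - t) * f y1 x + t * f y2 x := hcomb
        _ ≤ (1 - t) * c' + t * c' := by
            have h1 := ht.1; have h2 := ht.2
            have := hnot.1; have := hnot.2
            nlinarith
        _ = c' := by ring
    linarith [hx.2]
  have hAt_key : ∀ t ∈ Set.Icc (0:ℝ) 1, ¬((At t ∩ U1).Nonempty ∧ (At t ∩ U2).Nonempty) := by
    rintro t ht ⟨h1, h2⟩
    have hpre : IsPreconnected (At t) := (hAt_conv t ht).isPreconnected
    obtain ⟨x, hx⟩ := hpre U1 U2 hU1o hU2o (hAt_sub t ht) h1 h2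
    exact hDU x hx.1.1 hx.2.1 hx.2.2
  -- the two relatively open pieces of [0,1]
  set O1 : Set ℝ := ⋃ x ∈ U1 ∩ D, {t : ℝ | c < f (yseg t) x} with hO1
  set O2 : Set ℝ := ⋃ x ∈ U2 ∩ D, {t : ℝ | c < f (yseg t) x} with hO2
  have hO1o : IsOpen O1 := isOpen_biUnion fun x _ =>
    isOpen_lt continuous_const (hf.comp (hyseg_cont.prodMk continuous_const))
  have hO2o : IsOpen O2 := isOpen_biUnion fun x _ =>
    isOpen_lt continuous_const (hf.comp (hyseg_cont.prodMk continuous_const))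
  have hcover : Set.Icc (0:ℝ) 1 ⊆ O1 ∪ O2 := by
    intro t ht
    obtain ⟨x, hxD, hxf⟩ := hcD (yseg t) (hysegY t ht)
    have hxAt : x ∈ At t := ⟨hxD, le_of_lt hxf⟩
    rcases hAt_sub t ht hxAt with hx1 | hx2
    · exact Or.inl (Set.mem_biUnion ⟨hx1, hxD⟩ hxf)
    · exact Or.inr (Set.mem_biUnion ⟨hx2, hxD⟩ hxf)
  have h0 : (0:ℝ) ∈ Set.Icc (0:ℝ) 1 ∩ O1 := by
    refine ⟨by norm_num, ?_⟩
    obtain ⟨x, hxD, hxf⟩ := hcD y1 hy1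
    have hy0 : yseg 0 = y1 := by simp [hyseg]
    have hxU1 : x ∈ U1 := by simp only [hU1, Set.mem_setOf_eq]; linarith
    exact Set.mem_biUnion ⟨hxU1, hxD⟩ (show c < f (yseg 0) x by rw [hy0]; exact hxf)
  have h1m : (1:ℝ) ∈ Set.Icc (0:ℝ) 1 ∩ O2 := by
    refine ⟨by norm_num, ?_⟩
    obtain ⟨x, hxD, hxf⟩ := hcD y2 hy2
    have hy1' : yseg 1 = y2 := by simp [hyseg]
    have hxU2 : x ∈ U2 := by simp only [hU2, Set.mem_setOf_eq]; linarith
    exact Set.mem_biUnion ⟨hxU2, hxD⟩ (show c < f (yseg 1) x by rw [hy1']; exact hxf)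
  obtain ⟨t, htI, ht1, ht2⟩ := isPreconnected_Icc O1 O2 hO1o hO2o hcover ⟨0, h0⟩ ⟨1, h1m⟩
  obtain ⟨x1, hx1U, hx1f⟩ : ∃ x ∈ U1 ∩ D, c < f (yseg t) x := by
    simpa [hO1] using ht1
  obtain ⟨x2, hx2U, hx2f⟩ : ∃ x ∈ U2 ∩ D, c < f (yseg t) x := by
    simpa [hO2] using ht2
  exact hAt_key t htI ⟨⟨x1, ⟨hx1U.2, le_of_lt hx1f⟩, hx1U.1⟩,
    ⟨x2, ⟨hx2U.2, le_of_lt hx2f⟩, hx2U.1⟩⟩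


/-- Finite-family version by induction. -/
lemma finite_lemma {X : Set E} {Y : Set F} {f : F → E → ℝ}
    (hf : Continuous fun p : F × E => f p.1 p.2)
    (hYconv : Convex ℝ Y) (hYne : Y.Nonempty)
    (hconc : ∀ y ∈ Y, ∀ x1 ∈ X, ∀ x2 ∈ X, ∀ t t' : ℝ, 0 ≤ t → 0 ≤ t' → t + t' = 1 →
      t * f y x1 + t' * f y x2 ≤ f y (t • x1 + t' • x2))
    (hconv : ∀ x ∈ X, ∀ y1 ∈ Y, ∀ y2 ∈ Y, ∀ t t' : ℝ, 0 ≤ t → 0 ≤ t' → t + t' = 1 →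
      f (t • y1 + t' • y2) x ≤ t * f y1 x + t' * f y2 x) :
    ∀ (L : List F), (∀ y ∈ L, y ∈ Y) → ∀ (c c' : ℝ) (D : Set E), c' < c →
      Convex ℝ D → D ⊆ X →
      (∀ y ∈ Y, ∃ x ∈ D, c < f y x) →
      ∃ x ∈ D, ∀ y ∈ L, c' < f y x := by
  intro L
  induction L with
  | nil =>
    intro _ c c' D _ _ _ hcD
    obtain ⟨y0, hy0⟩ := id hYne
    obtain ⟨x, hx, _⟩ := hcD y0 hy0
    exact ⟨x, hx, by simp⟩
  | cons y0 L' ih =>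
    intro hLY c c' D hcc hDconv hDX hcD
    have hy0Y : y0 ∈ Y := hLY y0 (List.mem_cons_self)
    set c'' : ℝ := (c' + c) / 2 with hc''
    have hc1 : c' < c'' := by simp [hc'']; linarith
    have hc2 : c'' < c := by simp [hc'']; linarith
    set D' : Set E := {x ∈ D | c'' ≤ f y0 x} with hD'
    have hD'X : D' ⊆ X := fun x hx => hDX hx.1
    have hD'conv : Convex ℝ D' := by
      intro x1 hx1 x2 hx2 a b ha hb hab
      refine ⟨hDconv hx1.1 hx2.1 ha hb hab, ?_⟩
      have := hconc y0 hy0Y x1 (hDX hx1.1) x2 (hDX hx2.1) a b ha hb hab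
      have hsum : a * c'' + b * c'' = c'' := by rw [← add_mul, hab, one_mul]
      have e1 := mul_le_mul_of_nonneg_left hx1.2 ha
      have e2 := mul_le_mul_of_nonneg_left hx2.2 hb
      linarith
    have hcD' : ∀ y ∈ Y, ∃ x ∈ D', c'' < f y x := by
      intro y hy
      obtain ⟨x, hxD, h1, h2⟩ := pair_lemma hf hYconv hconc hconv hDX hDconv hc2 hcD hy0Y hy
      exact ⟨x, ⟨hxD, le_of_lt h1⟩, h2⟩
    obtain ⟨x, hxD', hxall⟩ := ih (fun y hy => hLY y (List.mem_cons_of_mem _ hy))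
      c'' c' D' hc1 hD'conv hD'X hcD'
    refine ⟨x, hxD'.1, ?_⟩
    intro y hy
    rcases List.mem_cons.mp hy with h | h
    · rw [h]; linarith [hxD'.2]
    · exact hxall y h

/-- The key existence statement via compactness. -/
lemma exists_uniform {X : Set E} {Y : Set F} {f : F → E → ℝ}
    (hf : Continuous fun p : F × E => f p.1 p.2)
    (hXc : IsCompact X) (hXconv : Convex ℝ X)
    (hYconv : Convex ℝ Y) (hYne : Y.Nonempty)
    (hconc : ∀ y ∈ Y, ∀ x1 ∈ X, ∀ x2 ∈ X, ∀ t t' : ℝ, 0 ≤ t → 0 ≤ t' → t + t' = 1 →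
      t * f y x1 + t' * f y x2 ≤ f y (t • x1 + t' • x2))
    (hconv : ∀ x ∈ X, ∀ y1 ∈ Y, ∀ y2 ∈ Y, ∀ t t' : ℝ, 0 ≤ t → 0 ≤ t' → t + t' = 1 →
      f (t • y1 + t' • y2) x ≤ t * f y1 x + t' * f y2 x)
    {c c' : ℝ} (hcc : c' < c)
    (hcX : ∀ y ∈ Y, ∃ x ∈ X, c < f y x) :
    ∃ x ∈ X, ∀ y ∈ Y, c' ≤ f y x := by
  have hfy : ∀ y : F, Continuous fun x => f y x := fun y =>
    hf.comp (continuous_const.prodMk continuous_id)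
  set t : Y → Set E := fun y => {x | c' ≤ f y.1 x} with hts
  have htc : ∀ y : Y, IsClosed (t y) := fun y =>
    isClosed_le continuous_const (hfy y.1)
  by_contra hcon
  push_neg at hcon
  have hempty : X ∩ ⋂ y : Y, t y = ∅ := by
    by_contra hne
    obtain ⟨x, hxX, hxt⟩ := Set.nonempty_iff_ne_empty.mpr hne
    simp only [Set.mem_iInter] at hxt
    obtain ⟨y, hyY, hylt⟩ := hcon x hxX
    exact absurd (hxt ⟨y, hyY⟩) (not_le.mpr (lt_of_not_ge (fun h => absurd h (not_le.mpr hylt))))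
  obtain ⟨u, hu⟩ := hXc.elim_finite_subfamily_closed t htc hempty
  have hL : ∀ y ∈ (u.toList.map Subtype.val), y ∈ Y := by
    intro y hy
    simp only [List.mem_map] at hy
    obtain ⟨⟨y', hy'⟩, _, rfl⟩ := hy
    exact hy'
  obtain ⟨x, hxX, hxall⟩ := finite_lemma hf hYconv hYne hconc hconv
    (u.toList.map Subtype.val) hL c c' X hcc hXconv (le_refl _) hcX
  have : x ∈ X ∩ ⋂ y ∈ u, t y := by
    refine ⟨hxX, ?_⟩
    simp only [Set.mem_iInter]
    intro y hyu
    exact le_of_lt (hxall y.1 (List.mem_map_of_mem (Finset.mem_toList.mpr hyu)))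
  rw [hu] at this
  exact this

/-- Abstract minimax equality. -/
theorem minimax_eq {X : Set E} {Y : Set F} {f : F → E → ℝ}
    (hf : Continuous fun p : F × E => f p.1 p.2)
    (hXc : IsCompact X) (hXconv : Convex ℝ X) (hXne : X.Nonempty)
    (hYc : IsCompact Y) (hYconv : Convex ℝ Y) (hYne : Y.Nonempty)
    (hconc : ∀ y ∈ Y, ∀ x1 ∈ X, ∀ x2 ∈ X, ∀ t t' : ℝ, 0 ≤ t → 0 ≤ t' → t + t' = 1 →
      t * f y x1 + t' * f y x2 ≤ f y (t • x1 + t' • x2))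
    (hconv : ∀ x ∈ X, ∀ y1 ∈ Y, ∀ y2 ∈ Y, ∀ t t' : ℝ, 0 ≤ t → 0 ≤ t' → t + t' = 1 →
      f (t • y1 + t' • y2) x ≤ t * f y1 x + t' * f y2 x) :
    sInf {z : ℝ | ∃ y ∈ Y, z = sSup {w : ℝ | ∃ x ∈ X, w = f y x}}
      = sSup {w : ℝ | ∃ x ∈ X, w = sInf {z : ℝ | ∃ y ∈ Y, z = f y x}} := by
  -- bounds
  obtain ⟨m, hm⟩ : ∃ m : ℝ, ∀ y ∈ Y, ∀ x ∈ X, m ≤ f y x := by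
    have : IsCompact ((fun p : F × E => f p.1 p.2) '' (Y ×ˢ X)) :=
      (hYc.prod hXc).image hf
    obtain ⟨m, hm⟩ := this.bddBelow
    exact ⟨m, fun y hy x hx => hm ⟨(y, x), ⟨hy, hx⟩, rfl⟩⟩
  obtain ⟨M, hM⟩ : ∃ M : ℝ, ∀ y ∈ Y, ∀ x ∈ X, f y x ≤ M := by
    have : IsCompact ((fun p : F × E => f p.1 p.2) '' (Y ×ˢ X)) :=
      (hYc.prod hXc).image hf
    obtain ⟨M, hM⟩ := this.bddAbove
    exact ⟨M, fun y hy x hx => hM ⟨(y, x), ⟨hy, hx⟩, rfl⟩⟩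
  obtain ⟨x0, hx0⟩ := id hXne
  obtain ⟨y0, hy0⟩ := id hYne
  set g : F → ℝ := fun y => sSup {w : ℝ | ∃ x ∈ X, w = f y x} with hg
  set h : E → ℝ := fun x => sInf {z : ℝ | ∃ y ∈ Y, z = f y x} with hh
  have hgne : ∀ y : F, {w : ℝ | ∃ x ∈ X, w = f y x}.Nonempty := fun y => ⟨f y x0, x0, hx0, rfl⟩
  have hgbdd : ∀ y ∈ Y, BddAbove {w : ℝ | ∃ x ∈ X, w = f y x} := by
    rintro y hy
    exact ⟨M, by rintro w ⟨x, hx, rfl⟩; exact hM y hy x hx⟩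
  have hhne : ∀ x : E, {z : ℝ | ∃ y ∈ Y, z = f y x}.Nonempty := fun x => ⟨f y0 x, y0, hy0, rfl⟩
  have hhbdd : ∀ x ∈ X, BddBelow {z : ℝ | ∃ y ∈ Y, z = f y x} := by
    rintro x hx
    exact ⟨m, by rintro z ⟨y, hy, rfl⟩; exact hm y hy x hx⟩
  have hLne : {z : ℝ | ∃ y ∈ Y, z = g y}.Nonempty := ⟨g y0, y0, hy0, rfl⟩
  have hRne : {w : ℝ | ∃ x ∈ X, w = h x}.Nonempty := ⟨h x0, x0, hx0, rfl⟩
  have hLbdd : BddBelow {z : ℝ | ∃ y ∈ Y, z = g y} := by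
    refine ⟨m, ?_⟩
    rintro z ⟨y, hy, rfl⟩
    exact le_trans (hm y hy x0 hx0) (le_csSup (hgbdd y hy) ⟨x0, hx0, rfl⟩)
  have hRbdd : BddAbove {w : ℝ | ∃ x ∈ X, w = h x} := by
    refine ⟨M, ?_⟩
    rintro w ⟨x, hx, rfl⟩
    exact le_trans (csInf_le (hhbdd x hx) ⟨y0, hy0, rfl⟩) (hM y0 hy0 x hx)
  set L : ℝ := sInf {z : ℝ | ∃ y ∈ Y, z = g y} with hL
  set Rr : ℝ := sSup {w : ℝ | ∃ x ∈ X, w = h x} with hR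
  show L = Rr
  have easy : Rr ≤ L := by
    apply csSup_le hRne
    rintro w ⟨x, hx, rfl⟩
    apply le_csInf hLne
    rintro z ⟨y, hy, rfl⟩
    calc h x ≤ f y x := csInf_le (hhbdd x hx) ⟨y, hy, rfl⟩
      _ ≤ g y := le_csSup (hgbdd y hy) ⟨x, hx, rfl⟩
  have hard : L ≤ Rr := by
    by_contra hcon
    push_neg at hcon
    set c' : ℝ := Rr + (L - Rr) / 3 with hc'
    set c : ℝ := Rr + 2 * (L - Rr) / 3 with hc
    have hcc : c' < c := by simp [hc', hc]; linarith
    have hcL : c < L := by simp [hc]; linarith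
    have hRc' : Rr < c' := by simp [hc']; linarith
    have hcX : ∀ y ∈ Y, ∃ x ∈ X, c < f y x := by
      intro y hy
      have hLg : L ≤ g y := csInf_le hLbdd ⟨y, hy, rfl⟩
      have : c < g y := lt_of_lt_of_le hcL hLg
      obtain ⟨w, ⟨x, hx, rfl⟩, hw⟩ := exists_lt_of_lt_csSup (hgne y) this
      exact ⟨x, hx, hw⟩
    obtain ⟨x, hxX, hxall⟩ := exists_uniform hf hXc hXconv hYconv hYne hconc hconv hcc hcX
    have : c' ≤ h x := le_csInf (hhne x) (by rintro z ⟨y, hy, rfl⟩; exact hxall y hy)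
    have : c' ≤ Rr := le_trans this (le_csSup hRbdd ⟨x, hxX, rfl⟩)
    linarith
  linarith

variable {X Y : Type*} [Fintype X] [Fintype Y]

lemma mutInfo_eq_sum_k (W : Y → X → ℝ) (q : X → ℝ) :
    mutInfo W q = ∑ y, ∑ x, k (W y x * q x) ((∑ x', W y x' * q x') * q x) := by
  unfold mutInfo
  refine Finset.sum_congr rfl fun y _ => Finset.sum_congr rfl fun x _ => ?_
  rcases eq_or_ne (q x) 0 with h | h
  · simp [k, h]
  · rw [k, mul_div_mul_right _ _ h]

lemma mutInfo_convex (W1 W2 : Y → X → ℝ) (q : X → ℝ)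
    (hq : ∀ x, 0 ≤ q x) (hW1 : ∀ y x, 0 ≤ W1 y x) (hW2 : ∀ y x, 0 ≤ W2 y x)
    {t t' : ℝ} (ht : 0 ≤ t) (ht' : 0 ≤ t') (htt : t + t' = 1) :
    mutInfo (fun y x => t * W1 y x + t' * W2 y x) q
      ≤ t * mutInfo W1 q + t' * mutInfo W2 q := by
  rw [mutInfo_eq_sum_k, mutInfo_eq_sum_k, mutInfo_eq_sum_k, Finset.mul_sum, Finset.mul_sum,
    ← Finset.sum_add_distrib]
  refine Finset.sum_le_sum fun y _ => ?_
  rw [Finset.mul_sum, Finset.mul_sum, ← Finset.sum_add_distrib]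
  refine Finset.sum_le_sum fun x _ => ?_
  have hv : (∑ x', (t * W1 y x' + t' * W2 y x') * q x')
      = t * (∑ x', W1 y x' * q x') + t' * (∑ x', W2 y x' * q x') := by
    rw [Finset.mul_sum, Finset.mul_sum, ← Finset.sum_add_distrib]
    exact Finset.sum_congr rfl fun x' _ => by ring
  have himp : ∀ (W : Y → X → ℝ), (∀ y x, 0 ≤ W y x) →
      ((∑ x', W y x' * q x') * q x = 0 → W y x * q x = 0) := by
    intro W hW h
    rcases mul_eq_zero.mp h with h | h
    · have := (Finset.sum_eq_zero_iff_of_nonneg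
        (fun x' _ => mul_nonneg (hW y x') (hq x'))).mp h
      exact this x (Finset.mem_univ x)
    · rw [h, mul_zero]
  have key := k_comb (u1 := W1 y x * q x) (u2 := W2 y x * q x)
    (w1 := (∑ x', W1 y x' * q x') * q x) (w2 := (∑ x', W2 y x' * q x') * q x)
    ht ht' (mul_nonneg (hW1 y x) (hq x)) (mul_nonneg (hW2 y x) (hq x))
    (mul_nonneg (Finset.sum_nonneg fun x' _ => mul_nonneg (hW1 y x') (hq x')) (hq x))
    (mul_nonneg (Finset.sum_nonneg fun x' _ => mul_nonneg (hW2 y x') (hq x')) (hq x))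
    (himp W1 hW1) (himp W2 hW2)
  calc k ((t * W1 y x + t' * W2 y x) * q x)
        ((∑ x', (t * W1 y x' + t' * W2 y x') * q x') * q x)
      = k (t * (W1 y x * q x) + t' * (W2 y x * q x))
        (t * ((∑ x', W1 y x' * q x') * q x) + t' * ((∑ x', W2 y x' * q x') * q x)) := by
        rw [hv]; ring_nf
    _ ≤ t * k (W1 y x * q x) ((∑ x', W1 y x' * q x') * q x)
        + t' * k (W2 y x * q x) ((∑ x', W2 y x' * q x') * q x) := key

noncomputable def Gfun (W : Y → X → ℝ) (q : X → ℝ) : ℝ :=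
  (∑ x, q x * ∑ y, W y x * Real.log (W y x)) +
  ∑ y, -((∑ x, W y x * q x) * Real.log (∑ x, W y x * q x))

lemma Gfun_eq_mutInfo {W : Y → X → ℝ} {q : X → ℝ}
    (hW : ∀ y x, 0 ≤ W y x) (hq : ∀ x, 0 ≤ q x) :
    Gfun W q = mutInfo W q := by
  unfold Gfun mutInfo
  have key : ∀ y : Y, ∑ x, W y x * q x * Real.log (W y x / ∑ x', W y x' * q x')
      = (∑ x, q x * (W y x * Real.log (W y x)))
        - (∑ x, W y x * q x) * Real.log (∑ x, W y x * q x) := by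
    intro y
    set v : ℝ := ∑ x, W y x * q x with hv
    have step : ∀ x, W y x * q x * Real.log (W y x / v)
        = q x * (W y x * Real.log (W y x)) - (W y x * q x) * Real.log v := by
      intro x
      rcases eq_or_ne (q x) 0 with h | h
      · simp [h]
      rcases eq_or_ne (W y x) 0 with h2 | h2
      · simp [h2]
      have hWpos : 0 < W y x := lt_of_le_of_ne (hW y x) (Ne.symm h2)
      have hqpos : 0 < q x := lt_of_le_of_ne (hq x) (Ne.symm h)
      have hvpos : 0 < v := by
        calc (0:ℝ) < W y x * q x := mul_pos hWpos hqpos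
          _ ≤ v := Finset.single_le_sum
            (fun x' _ => mul_nonneg (hW y x') (hq x')) (Finset.mem_univ x)
      rw [Real.log_div (ne_of_gt hWpos) (ne_of_gt hvpos)]
      ring
    rw [Finset.sum_congr rfl fun x _ => step x, Finset.sum_sub_distrib, ← Finset.sum_mul]
  rw [Finset.sum_congr rfl fun y (_ : y ∈ Finset.univ) => key y, Finset.sum_sub_distrib]
  rw [Finset.sum_comm]
  congr 1
  · exact Finset.sum_congr rfl fun x _ => by rw [Finset.mul_sum]
  · rw [← Finset.sum_neg_distrib]

lemma Gfun_concave {W : Y → X → ℝ} {q1 q2 : X → ℝ}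
    (hW : ∀ y x, 0 ≤ W y x) (hq1 : ∀ x, 0 ≤ q1 x) (hq2 : ∀ x, 0 ≤ q2 x)
    {t t' : ℝ} (ht : 0 ≤ t) (ht' : 0 ≤ t') (htt : t + t' = 1) :
    t * Gfun W q1 + t' * Gfun W q2 ≤ Gfun W (fun x => t * q1 x + t' * q2 x) := by
  unfold Gfun
  have lin : (∑ x, (t * q1 x + t' * q2 x) * ∑ y, W y x * Real.log (W y x))
      = t * (∑ x, q1 x * ∑ y, W y x * Real.log (W y x))
        + t' * (∑ x, q2 x * ∑ y, W y x * Real.log (W y x)) := by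
    rw [Finset.mul_sum, Finset.mul_sum, ← Finset.sum_add_distrib]
    exact Finset.sum_congr rfl fun x _ => by ring
  rw [lin]
  have ent : t * (∑ y, -((∑ x, W y x * q1 x) * Real.log (∑ x, W y x * q1 x)))
      + t' * (∑ y, -((∑ x, W y x * q2 x) * Real.log (∑ x, W y x * q2 x)))
      ≤ ∑ y, -((∑ x, W y x * (t * q1 x + t' * q2 x))
          * Real.log (∑ x, W y x * (t * q1 x + t' * q2 x))) := by
    rw [Finset.mul_sum, Finset.mul_sum, ← Finset.sum_add_distrib]
    refine Finset.sum_le_sum fun y _ => ?_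
    set v1 : ℝ := ∑ x, W y x * q1 x with hv1
    set v2 : ℝ := ∑ x, W y x * q2 x with hv2
    have hv1n : 0 ≤ v1 := Finset.sum_nonneg fun x _ => mul_nonneg (hW y x) (hq1 x)
    have hv2n : 0 ≤ v2 := Finset.sum_nonneg fun x _ => mul_nonneg (hW y x) (hq2 x)
    have hvt : (∑ x, W y x * (t * q1 x + t' * q2 x)) = t * v1 + t' * v2 := by
      rw [hv1, hv2, Finset.mul_sum, Finset.mul_sum, ← Finset.sum_add_distrib]
      exact Finset.sum_congr rfl fun x _ => by ring
    rw [hvt]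
    have key := k_comb (u1 := v1) (u2 := v2) (w1 := 1) (w2 := 1) ht ht' hv1n hv2n
      zero_le_one zero_le_one (fun h => absurd h one_ne_zero)
      (fun h => absurd h one_ne_zero)
    have e1 : t * 1 + t' * 1 = 1 := by rw [mul_one, mul_one]; exact htt
    rw [e1] at key
    simp only [k, div_one] at key
    linarith
  linarith

lemma Gfun_continuous :
    Continuous fun p : (Y → X → ℝ) × (X → ℝ) => Gfun p.1 p.2 := by
  have hml : Continuous fun x : ℝ => x * Real.log x := Real.continuous_mul_log
  apply Continuous.add
  · apply continuous_finset_sum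
    intro x _
    apply Continuous.mul
    · exact (continuous_apply x).comp continuous_snd
    · apply continuous_finset_sum
      intro y _
      exact hml.comp ((continuous_apply x).comp ((continuous_apply y).comp continuous_fst))
  · apply continuous_finset_sum
    intro y _
    apply Continuous.neg
    have hvy : Continuous fun p : (Y → X → ℝ) × (X → ℝ) => ∑ x, p.1 y x * p.2 x := by
      apply continuous_finset_sum
      intro x _
      exact ((continuous_apply x).comp ((continuous_apply y).comp continuous_fst)).mul
        ((continuous_apply x).comp continuous_snd)
    exact hml.comp hvy

section Assembly

variable {R S : Type*} [Fintype R] [Fintype S] [DecidableEq S] {A B : ℕ}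

/-- The channel associated with `ρ`. -/
def Wch (ρ : R → (Fin B → S) → Fin A → ℝ) : (Fin B → S) → Fin A → ℝ :=
  fun ss a => ∑ r, ρ r ss a

lemma Wch_nonneg {P : R → S → Fin A → Fin B → ℝ} {ρ : R → (Fin B → S) → Fin A → ℝ}
    (hρ : MemV P ρ) : ∀ ss a, 0 ≤ Wch ρ ss a :=
  fun ss a => Finset.sum_nonneg fun r _ => hρ.1 r ss a

/-- The simplex of distributions. -/
lemma simplex_convex : Convex ℝ {q : Fin A → ℝ | IsDist q} := by
  intro q1 hq1 q2 hq2 a b ha hb hab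
  refine ⟨fun x => ?_, ?_⟩
  · have : (a • q1 + b • q2) x = a * q1 x + b * q2 x := by
      simp [Pi.add_apply, Pi.smul_apply, smul_eq_mul]
    rw [this]
    exact add_nonneg (mul_nonneg ha (hq1.1 x)) (mul_nonneg hb (hq2.1 x))
  · have : ∑ x, (a • q1 + b • q2) x = a * (∑ x, q1 x) + b * (∑ x, q2 x) := by
      rw [Finset.mul_sum, Finset.mul_sum, ← Finset.sum_add_distrib]
      exact Finset.sum_congr rfl fun x _ => by
        simp [Pi.add_apply, Pi.smul_apply, smul_eq_mul]
    rw [this, hq1.2, hq2.2, mul_one, mul_one, hab]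

lemma simplex_compact : IsCompact {q : Fin A → ℝ | IsDist q} := by
  apply Metric.isCompact_of_isClosed_isBounded
  · have h1 : IsClosed {q : Fin A → ℝ | ∀ x, 0 ≤ q x} := by
      have : {q : Fin A → ℝ | ∀ x, 0 ≤ q x} = ⋂ x, {q : Fin A → ℝ | 0 ≤ q x} := by
        ext q; simp
      rw [this]
      exact isClosed_iInter fun x => isClosed_le continuous_const (continuous_apply x)
    have h2 : IsClosed {q : Fin A → ℝ | ∑ x, q x = 1} :=
      isClosed_eq (continuous_finset_sum _ fun x _ => continuous_apply x) continuous_const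
    have : {q : Fin A → ℝ | IsDist q}
        = {q : Fin A → ℝ | ∀ x, 0 ≤ q x} ∩ {q : Fin A → ℝ | ∑ x, q x = 1} := by
      ext q; exact ⟨fun h => ⟨h.1, h.2⟩, fun h => ⟨h.1, h.2⟩⟩
    rw [this]
    exact h1.inter h2
  · rw [Metric.isBounded_iff_subset_closedBall 0]
    refine ⟨1, fun q hq => ?_⟩
    rw [Metric.mem_closedBall, dist_zero_right]
    rw [pi_norm_le_iff_of_nonneg zero_le_one]
    intro x
    rw [Real.norm_eq_abs, abs_le]
    constructor
    · linarith [hq.1 x]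
    · calc q x ≤ ∑ x', q x' :=
        Finset.single_le_sum (fun x' _ => hq.1 x') (Finset.mem_univ x)
      _ = 1 := hq.2

lemma simplex_nonempty (hA : 0 < A) : Set.Nonempty {q : Fin A → ℝ | IsDist q} := by
  refine ⟨fun _ => (A : ℝ)⁻¹, fun x => by positivity, ?_⟩
  rw [Finset.sum_const, Finset.card_univ, Fintype.card_fin, nsmul_eq_mul]
  field_simp

lemma V_convex (P : R → S → Fin A → Fin B → ℝ) : Convex ℝ {ρ | MemV P ρ} := by
  intro ρ1 hρ1 ρ2 hρ2 a b ha hb hab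
  have happ : ∀ r ss a', (a • ρ1 + b • ρ2) r ss a' = a * ρ1 r ss a' + b * ρ2 r ss a' := by
    intro r ss a'
    simp [Pi.add_apply, Pi.smul_apply, smul_eq_mul]
  refine ⟨fun r ss a' => ?_, fun a' => ?_, fun a' b' r s => ?_⟩
  · rw [happ]
    exact add_nonneg (mul_nonneg ha (hρ1.1 r ss a')) (mul_nonneg hb (hρ2.1 r ss a'))
  · have : ∑ r, ∑ ss : Fin B → S, (a • ρ1 + b • ρ2) r ss a'
        = a * (∑ r, ∑ ss : Fin B → S, ρ1 r ss a') + b * (∑ r, ∑ ss : Fin B → S, ρ2 r ss a') := by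
      rw [Finset.mul_sum, Finset.mul_sum, ← Finset.sum_add_distrib]
      refine Finset.sum_congr rfl fun r _ => ?_
      rw [Finset.mul_sum, Finset.mul_sum, ← Finset.sum_add_distrib]
      exact Finset.sum_congr rfl fun ss _ => by rw [happ]
    rw [this, hρ1.2.1 a', hρ2.2.1 a', mul_one, mul_one, hab]
  · have : ∑ ss : Fin B → S, (if ss b' = s then (a • ρ1 + b • ρ2) r ss a' else 0)
        = a * (∑ ss : Fin B → S, (if ss b' = s then ρ1 r ss a' else 0))
          + b * (∑ ss : Fin B → S, (if ss b' = s then ρ2 r ss a' else 0)) := by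
      rw [Finset.mul_sum, Finset.mul_sum, ← Finset.sum_add_distrib]
      refine Finset.sum_congr rfl fun ss _ => ?_
      split_ifs with h
      · rw [happ]
      · ring
    rw [this, hρ1.2.2 a' b' r s, hρ2.2.2 a' b' r s, ← add_mul, hab, one_mul]

lemma V_compact (P : R → S → Fin A → Fin B → ℝ) : IsCompact {ρ | MemV P ρ} := by
  apply Metric.isCompact_of_isClosed_isBounded
  · have heval : ∀ (r : R) (ss : Fin B → S) (a : Fin A),
        Continuous fun ρ : R → (Fin B → S) → Fin A → ℝ => ρ r ss a := fun r ss a =>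
      (continuous_apply a).comp ((continuous_apply ss).comp (continuous_apply r))
    have h1 : IsClosed {ρ : R → (Fin B → S) → Fin A → ℝ | ∀ r ss a, 0 ≤ ρ r ss a} := by
      have : {ρ : R → (Fin B → S) → Fin A → ℝ | ∀ r ss a, 0 ≤ ρ r ss a}
          = ⋂ r, ⋂ ss, ⋂ a, {ρ : R → (Fin B → S) → Fin A → ℝ | 0 ≤ ρ r ss a} := by
        ext ρ; simp
      rw [this]
      exact isClosed_iInter fun r => isClosed_iInter fun ss => isClosed_iInter fun a =>
        isClosed_le continuous_const (heval r ss a)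
    have h2 : IsClosed {ρ : R → (Fin B → S) → Fin A → ℝ |
        ∀ a, ∑ r, ∑ ss : Fin B → S, ρ r ss a = 1} := by
      have : {ρ : R → (Fin B → S) → Fin A → ℝ | ∀ a, ∑ r, ∑ ss : Fin B → S, ρ r ss a = 1}
          = ⋂ a, {ρ : R → (Fin B → S) → Fin A → ℝ | ∑ r, ∑ ss : Fin B → S, ρ r ss a = 1} := by
        ext ρ; simp
      rw [this]
      refine isClosed_iInter fun a => isClosed_eq ?_ continuous_const
      exact continuous_finset_sum _ fun r _ => continuous_finset_sum _ fun ss _ => heval r ss a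
    have h3 : IsClosed {ρ : R → (Fin B → S) → Fin A → ℝ |
        ∀ a b r s, ∑ ss : Fin B → S, (if ss b = s then ρ r ss a else 0) = P r s a b} := by
      have : {ρ : R → (Fin B → S) → Fin A → ℝ |
          ∀ a b r s, ∑ ss : Fin B → S, (if ss b = s then ρ r ss a else 0) = P r s a b}
          = ⋂ a, ⋂ b, ⋂ r, ⋂ s, {ρ : R → (Fin B → S) → Fin A → ℝ |
              ∑ ss : Fin B → S, (if ss b = s then ρ r ss a else 0) = P r s a b} := by
        ext ρ; simp
      rw [this]
      refine isClosed_iInter fun a => isClosed_iInter fun b => isClosed_iInter fun r =>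
        isClosed_iInter fun s => isClosed_eq ?_ continuous_const
      refine continuous_finset_sum _ fun ss _ => ?_
      split_ifs with h
      · exact heval r ss a
      · exact continuous_const
    have : {ρ : R → (Fin B → S) → Fin A → ℝ | MemV P ρ}
        = _ ∩ (_ ∩ _) := Set.eq_of_subset_of_subset
          (fun ρ hρ => ⟨hρ.1, hρ.2.1, hρ.2.2⟩) (fun ρ hρ => ⟨hρ.1, hρ.2.1, hρ.2.2⟩)
    rw [this]
    exact h1.inter (h2.inter h3)
  · rw [Metric.isBounded_iff_subset_closedBall 0]
    refine ⟨1, fun ρ hρ => ?_⟩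
    rw [Metric.mem_closedBall, dist_zero_right]
    rw [pi_norm_le_iff_of_nonneg zero_le_one]
    intro r
    rw [pi_norm_le_iff_of_nonneg zero_le_one]
    intro ss
    rw [pi_norm_le_iff_of_nonneg zero_le_one]
    intro a
    rw [Real.norm_eq_abs, abs_le]
    constructor
    · linarith [hρ.1 r ss a]
    · calc ρ r ss a ≤ ∑ ss' : Fin B → S, ρ r ss' a :=
          Finset.single_le_sum (fun ss' _ => hρ.1 r ss' a) (Finset.mem_univ ss)
        _ ≤ ∑ r', ∑ ss' : Fin B → S, ρ r' ss' a :=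
          Finset.single_le_sum (fun r' _ =>
            Finset.sum_nonneg fun ss' _ => hρ.1 r' ss' a) (Finset.mem_univ r)
        _ = 1 := hρ.2.1 a



end Assembly
end MinimaxAux

open MinimaxAux in
/-- Minimax equality: `inf_{{ρ ∈ V(P)}} sup_q I_q(A;𝐒) = sup_q inf_{{ρ ∈ V(P)}} I_q(A;𝐒)`. -/
theorem stmt1 {R S : Type*} [Fintype R] [Fintype S] [DecidableEq S] {A B : ℕ}
    (P : R → S → Fin A → Fin B → ℝ) (hP : IsNSBox P)
    (hne : ∃ ρ, MemV P ρ) :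
    sInf { x : ℝ | ∃ ρ, MemV P ρ ∧
        x = sSup { y : ℝ | ∃ q : Fin A → ℝ, IsDist q ∧
              y = mutInfo (fun ss a => ∑ r, ρ r ss a) q } }
    = sSup { y : ℝ | ∃ q : Fin A → ℝ, IsDist q ∧
        y = sInf { x : ℝ | ∃ ρ, MemV P ρ ∧
              x = mutInfo (fun ss a => ∑ r, ρ r ss a) q } } := by
  rcases Nat.eq_zero_or_pos A with hA | hA
  · subst hA
    have hdist : ∀ q : Fin 0 → ℝ, ¬ IsDist q := by
      intro q hq
      have := hq.2
      simp at this
    have hsup0 : ∀ ρ : R → (Fin B → S) → Fin 0 → ℝ,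
        sSup {y : ℝ | ∃ q, IsDist q ∧ y = mutInfo (fun ss a => ∑ r, ρ r ss a) q} = 0 := by
      intro ρ
      rw [show {y : ℝ | ∃ q, IsDist q ∧ y = mutInfo (fun ss a => ∑ r, ρ r ss a) q}
          = (∅ : Set ℝ) from Set.eq_empty_iff_forall_notMem.mpr
            (by rintro y ⟨q, hq, _⟩; exact hdist q hq)]
      exact Real.sSup_empty
    have hL : {x : ℝ | ∃ ρ, MemV P ρ ∧
        x = sSup {y : ℝ | ∃ q, IsDist q ∧ y = mutInfo (fun ss a => ∑ r, ρ r ss a) q}}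
        = {(0 : ℝ)} := by
      ext x
      simp only [Set.mem_setOf_eq, Set.mem_singleton_iff]
      constructor
      · rintro ⟨ρ, hρ, rfl⟩
        exact hsup0 ρ
      · rintro rfl
        obtain ⟨ρ, hρ⟩ := hne
        exact ⟨ρ, hρ, (hsup0 ρ).symm⟩
    have hR : {y : ℝ | ∃ q : Fin 0 → ℝ, IsDist q ∧
        y = sInf {x : ℝ | ∃ ρ, MemV P ρ ∧
          x = mutInfo (fun ss a => ∑ r, ρ r ss a) q}} = (∅ : Set ℝ) :=
      Set.eq_empty_iff_forall_notMem.mpr (by rintro y ⟨q, hq, _⟩; exact hdist q hq)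
    rw [hL, hR, Real.sSup_empty, csInf_singleton]
  · set Xs : Set (Fin A → ℝ) := {q | IsDist q} with hXs
    set Ys : Set (R → (Fin B → S) → Fin A → ℝ) := {ρ | MemV P ρ} with hYs
    set f : (R → (Fin B → S) → Fin A → ℝ) → (Fin A → ℝ) → ℝ :=
      fun ρ q => Gfun (Wch ρ) q with hfdef
    have hYne : Ys.Nonempty := by obtain ⟨ρ, hρ⟩ := hne; exact ⟨ρ, hρ⟩
    have hf : Continuous fun p : (R → (Fin B → S) → Fin A → ℝ) × (Fin A → ℝ) =>
        f p.1 p.2 := by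
      have hWc : Continuous fun ρ : R → (Fin B → S) → Fin A → ℝ => Wch ρ := by
        apply continuous_pi; intro ss; apply continuous_pi; intro a
        exact continuous_finset_sum _ fun r _ =>
          (continuous_apply a).comp ((continuous_apply ss).comp (continuous_apply r))
      exact Gfun_continuous.comp ((hWc.comp continuous_fst).prodMk continuous_snd)
    have hconc : ∀ ρ ∈ Ys, ∀ q1 ∈ Xs, ∀ q2 ∈ Xs, ∀ t t' : ℝ, 0 ≤ t → 0 ≤ t' → t + t' = 1 →
        t * f ρ q1 + t' * f ρ q2 ≤ f ρ (t • q1 + t' • q2) := by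
      intro ρ hρ q1 hq1 q2 hq2 t t' ht ht' htt
      have key := Gfun_concave (Wch_nonneg hρ) hq1.1 hq2.1 ht ht' htt
      have heq : (t • q1 + t' • q2) = fun x => t * q1 x + t' * q2 x := by
        funext x; simp [Pi.add_apply, Pi.smul_apply, smul_eq_mul]
      rw [hfdef]
      simp only []
      rw [heq]
      exact key
    have hconv : ∀ q ∈ Xs, ∀ ρ1 ∈ Ys, ∀ ρ2 ∈ Ys, ∀ t t' : ℝ, 0 ≤ t → 0 ≤ t' → t + t' = 1 →
        f (t • ρ1 + t' • ρ2) q ≤ t * f ρ1 q + t' * f ρ2 q := by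
      intro q hq ρ1 hρ1 ρ2 hρ2 t t' ht ht' htt
      have hmem : (t • ρ1 + t' • ρ2) ∈ Ys := V_convex P hρ1 hρ2 ht ht' htt
      have hW12 : Wch (t • ρ1 + t' • ρ2)
          = fun ss a => t * Wch ρ1 ss a + t' * Wch ρ2 ss a := by
        funext ss a
        simp only [Wch, Pi.add_apply, Pi.smul_apply, smul_eq_mul]
        rw [Finset.mul_sum, Finset.mul_sum, ← Finset.sum_add_distrib]
      calc f (t • ρ1 + t' • ρ2) q
          = mutInfo (Wch (t • ρ1 + t' • ρ2)) q :=
            Gfun_eq_mutInfo (Wch_nonneg hmem) hq.1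
        _ = mutInfo (fun ss a => t * Wch ρ1 ss a + t' * Wch ρ2 ss a) q := by rw [hW12]
        _ ≤ t * mutInfo (Wch ρ1) q + t' * mutInfo (Wch ρ2) q :=
            mutInfo_convex _ _ q hq.1 (Wch_nonneg hρ1) (Wch_nonneg hρ2) ht ht' htt
        _ = t * f ρ1 q + t' * f ρ2 q := by
            rw [hfdef]
            simp only []
            rw [Gfun_eq_mutInfo (Wch_nonneg hρ1) hq.1, Gfun_eq_mutInfo (Wch_nonneg hρ2) hq.1]
    have main := minimax_eq hf simplex_compact simplex_convex (simplex_nonempty hA)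
      (V_compact P) (V_convex P) hYne hconc hconv
    have hset1 : ∀ ρ, MemV P ρ →
        {y : ℝ | ∃ q, IsDist q ∧ y = mutInfo (fun ss a => ∑ r, ρ r ss a) q}
          = {w : ℝ | ∃ q ∈ Xs, w = f ρ q} := by
      intro ρ hρ
      ext w
      simp only [Set.mem_setOf_eq]
      constructor
      · rintro ⟨q, hq, rfl⟩
        exact ⟨q, hq, (Gfun_eq_mutInfo (Wch_nonneg hρ) hq.1).symm⟩
      · rintro ⟨q, hq, rfl⟩
        exact ⟨q, hq, (Gfun_eq_mutInfo (Wch_nonneg hρ) hq.1).symm ▸ rfl⟩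
    have hset2 : ∀ q : Fin A → ℝ, IsDist q →
        {x : ℝ | ∃ ρ, MemV P ρ ∧ x = mutInfo (fun ss a => ∑ r, ρ r ss a) q}
          = {z : ℝ | ∃ ρ ∈ Ys, z = f ρ q} := by
      intro q hq
      ext z
      simp only [Set.mem_setOf_eq]
      constructor
      · rintro ⟨ρ, hρ, rfl⟩
        exact ⟨ρ, hρ, (Gfun_eq_mutInfo (Wch_nonneg hρ) hq.1).symm⟩
      · rintro ⟨ρ, hρ, rfl⟩
        exact ⟨ρ, hρ, (Gfun_eq_mutInfo (Wch_nonneg hρ) hq.1).symm ▸ rfl⟩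
    have houter1 : {x : ℝ | ∃ ρ, MemV P ρ ∧
        x = sSup {y : ℝ | ∃ q, IsDist q ∧ y = mutInfo (fun ss a => ∑ r, ρ r ss a) q}}
        = {z : ℝ | ∃ ρ ∈ Ys, z = sSup {w : ℝ | ∃ q ∈ Xs, w = f ρ q}} := by
      ext x
      simp only [Set.mem_setOf_eq]
      constructor
      · rintro ⟨ρ, hρ, rfl⟩
        exact ⟨ρ, hρ, by rw [hset1 ρ hρ]⟩
      · rintro ⟨ρ, hρ, rfl⟩
        exact ⟨ρ, hρ, by rw [hset1 ρ hρ]⟩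
    have houter2 : {y : ℝ | ∃ q : Fin A → ℝ, IsDist q ∧
        y = sInf {x : ℝ | ∃ ρ, MemV P ρ ∧ x = mutInfo (fun ss a => ∑ r, ρ r ss a) q}}
        = {w : ℝ | ∃ q ∈ Xs, w = sInf {z : ℝ | ∃ ρ ∈ Ys, z = f ρ q}} := by
      ext y
      simp only [Set.mem_setOf_eq]
      constructor
      · rintro ⟨q, hq, rfl⟩
        exact ⟨q, hq, by rw [hset2 q hq]⟩
      · rintro ⟨q, hq, rfl⟩
        exact ⟨q, hq, by rw [hset2 q hq]⟩
    rw [houter1, houter2]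
    exact main
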